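/- Let 𝕜 be ℝ or ℂ, V an inner product space over 𝕜, φ : V →ₗ[𝕜] V a finite potent endomorphism with index at most 1, and X a core inverse of φ. Suppose Y : V →ₗ[𝕜] V satisfies Y v = φ v for all v ∈ LinearMap.range φ and Y v = 0 for all v ∈ (LinearMap.range φ)ᗮ. Then Y is a Moore–Penrose inverse of X: X ∘ Y ∘ X = X, Y ∘ X ∘ Y = Y, and ⟪(X ∘ Y) u, w⟫ = ⟪u, (X ∘ Y) w⟫ and ⟪(Y ∘ X) u, w⟫ = ⟪u, (Y ∘ X) w⟫ for all u, w ∈ V. -/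

import Mathlib

theorem core_stmt7 {𝕜 : Type*} [RCLike 𝕜] {V : Type*} [NormedAddCommGroup V]
    [InnerProductSpace 𝕜 V] (φ X Y : V →ₗ[𝕜] V)
    (hfp : ∃ n : ℕ, FiniteDimensional 𝕜 (LinearMap.range (φ ^ n)))
    (hidx : IsCompl (LinearMap.range φ) (LinearMap.ker φ))
    (hX1 : ∀ v : V, v - φ (X v) ∈ (LinearMap.range φ)ᗮ)
    (hX2 : LinearMap.range X ≤ LinearMap.range φ)
    (hY1 : ∀ v ∈ LinearMap.range φ, Y v = φ v)
    (hY2 : ∀ v ∈ (LinearMap.range φ)ᗮ, Y v = 0) :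
    X ∘ₗ Y ∘ₗ X = X ∧ Y ∘ₗ X ∘ₗ Y = Y ∧
      (∀ u w : V, (inner 𝕜 ((X ∘ₗ Y) u) w : 𝕜) = inner 𝕜 u ((X ∘ₗ Y) w)) ∧
      (∀ u w : V, (inner 𝕜 ((Y ∘ₗ X) u) w : 𝕜) = inner 𝕜 u ((Y ∘ₗ X) w)) := by
  set R := LinearMap.range φ with hR
  have hdisj : ∀ x : V, x ∈ R → x ∈ Rᗮ → x = 0 := fun x hx hx' =>
    (Submodule.mem_bot 𝕜).1 (R.orthogonal_disjoint.le_bot ⟨hx, hx'⟩)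
  have hdisj2 : ∀ x : V, x ∈ R → φ x = 0 → x = 0 := fun x hx hx' =>
    (Submodule.mem_bot 𝕜).1 (hidx.disjoint.le_bot ⟨hx, hx'⟩)
  have hPmem : ∀ v, φ (X v) ∈ R := fun v => LinearMap.mem_range_self _ _
  have hXmem : ∀ v, X v ∈ R := fun v => hX2 (LinearMap.mem_range_self _ _)
  have hPfix : ∀ v ∈ R, φ (X v) = v := by
    intro v hv
    have h0 : v - φ (X v) = 0 :=
      hdisj _ (Submodule.sub_mem _ hv (hPmem v)) (hX1 v)
    exact (sub_eq_zero.1 h0).symm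
  have hXφ : ∀ v ∈ R, X (φ v) = v := by
    intro v hv
    have h0 : X (φ v) - v = 0 := by
      apply hdisj2 _ (Submodule.sub_mem _ (hXmem _) hv)
      rw [map_sub, hPfix _ (LinearMap.mem_range_self _ _), sub_self]
    exact sub_eq_zero.1 h0
  have hXP : ∀ v, X (φ (X v)) = X v := fun v => hXφ _ (hXmem v)
  have hYeq : ∀ v, Y v = φ (φ (X v)) := by
    intro v
    have hsplit : v = φ (X v) + (v - φ (X v)) := by abel
    calc Y v = Y (φ (X v)) + Y (v - φ (X v)) := by rw [← map_add, ← hsplit]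
      _ = φ (φ (X v)) + 0 := by rw [hY1 _ (hPmem v), hY2 _ (hX1 v)]
      _ = φ (φ (X v)) := by rw [add_zero]
  have hYX : ∀ v, Y (X v) = φ (X v) := fun v => hY1 _ (hXmem v)
  have hXY : ∀ v, X (Y v) = φ (X v) := by
    intro v
    rw [hYeq v, hXφ _ (hPmem v)]
  have hPsymm : ∀ u w : V, (inner 𝕜 (φ (X u)) w : 𝕜) = inner 𝕜 u (φ (X w)) := by
    intro u w
    have h1 : (inner 𝕜 (φ (X u)) (w - φ (X w)) : 𝕜) = 0 :=
      (Submodule.mem_orthogonal _ _).1 (hX1 w) _ (hPmem u)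
    have h2 : (inner 𝕜 (u - φ (X u)) (φ (X w)) : 𝕜) = 0 :=
      (Submodule.mem_orthogonal' _ _).1 (hX1 u) _ (hPmem w)
    rw [inner_sub_right] at h1
    rw [inner_sub_left] at h2
    have h1' := sub_eq_zero.1 h1
    have h2' := sub_eq_zero.1 h2
    rw [h1', ← h2']
  refine ⟨?_, ?_, ?_, ?_⟩
  · ext v
    simp only [LinearMap.comp_apply, hYX, hXP]
  · ext v
    simp only [LinearMap.comp_apply, hXY, hY1 _ (hPmem v), ← hYeq]
  · intro u w
    simp only [LinearMap.comp_apply, hXY]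
    exact hPsymm u w
  · intro u w
    simp only [LinearMap.comp_apply, hYX]
    exact hPsymm u w
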